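/- arXiv:1910.06377 — 3 statements merged into one kernel-verified Lean document; each statement's English description precedes it below -/
import Mathlib

section
/- Let n ≥ 3 and let p₁, p₂, p₃ be positive integers with n = p₁+p₂+p₃ and gcd(p₁,p₂,p₃) = 1. The Cayley graph G(p₁,p₂,p₃) contains a cycle of length 4 if and only if the triangle T(p₁,p₂,p₃) is isosceles or right, i.e., if and only if (p₁ = p₂ or p₂ = p₃ or p₁ = p₃) or (2p₁ = n or 2p₂ = n or 2p₃ = n). -/
open DihedralGroup

/-- The Cayley graph `G(p₁,p₂,p₃)` of the dihedral group `DihedralGroup n` with respect to the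
three reflections `a = sr 0`, `b = sr p₃`, `c = sr (-p₂)` coming from the sides of the rational
triangle `T(p₁,p₂,p₃)`: `x` is adjacent to `y` iff `y = g * x` for some `g ∈ {a, b, c}`. -/
def billiardGraph (n p₂ p₃ : ℕ) : SimpleGraph (DihedralGroup n) where
  Adj x y := x ≠ y ∧ ∃ g ∈ ({sr 0, sr (p₃ : ZMod n), sr (-(p₂ : ZMod n))} :
    Set (DihedralGroup n)), y = g * x
  symm := ⟨by
    rintro x y ⟨hxy, g, hg, rfl⟩
    refine ⟨fun h => hxy h.symm, g, hg, ?_⟩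
    simp only [Set.mem_insert_iff, Set.mem_singleton_iff] at hg
    obtain rfl | rfl | rfl := hg <;>
      rw [← mul_assoc, sr_mul_sr, sub_self, ← one_def, one_mul]⟩
  loopless := ⟨fun x h => h.1 rfl⟩

lemma billiard_cycle_aux (n p₂ p₃ : ℕ) (j1 j2 j3 j4 : ZMod n)
    (h1 : j1 ∈ ({0, (p₃:ZMod n), -(p₂:ZMod n)} : Set (ZMod n)))
    (h2 : j2 ∈ ({0, (p₃:ZMod n), -(p₂:ZMod n)} : Set (ZMod n)))
    (h3 : j3 ∈ ({0, (p₃:ZMod n), -(p₂:ZMod n)} : Set (ZMod n)))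
    (h4 : j4 ∈ ({0, (p₃:ZMod n), -(p₂:ZMod n)} : Set (ZMod n)))
    (hcl : j1 - j2 + j3 - j4 = 0)
    (h12 : j1 ≠ j2) (h23 : j2 ≠ j3) :
    ∃ (v : DihedralGroup n) (w : (billiardGraph n p₂ p₃).Walk v v),
      w.IsCycle ∧ w.length = 4 := by
  have memS : ∀ j : ZMod n, j ∈ ({0, (p₃:ZMod n), -(p₂:ZMod n)} : Set (ZMod n)) →
      sr j ∈ ({sr 0, sr (p₃ : ZMod n), sr (-(p₂ : ZMod n))} : Set (DihedralGroup n)) := by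
    rintro j (rfl | rfl | rfl) <;> simp
  have a1 : (billiardGraph n p₂ p₃).Adj 1 (sr j1) :=
    ⟨by simp [one_def, -r_zero], sr j1, memS _ h1, (mul_one _).symm⟩
  have a2 : (billiardGraph n p₂ p₃).Adj (sr j1) (r (j1 - j2)) :=
    ⟨by simp, sr j2, memS _ h2, by rw [sr_mul_sr]⟩
  have a3 : (billiardGraph n p₂ p₃).Adj (r (j1 - j2)) (sr (j3 + (j1 - j2))) :=
    ⟨by simp, sr j3, memS _ h3, by rw [sr_mul_r]⟩
  have a4 : (billiardGraph n p₂ p₃).Adj (sr (j3 + (j1 - j2))) 1 :=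
    ⟨by simp [one_def, -r_zero], sr j4, memS _ h4, by
      rw [sr_mul_sr, one_def]
      congr 1
      linear_combination -hcl⟩
  refine ⟨1, .cons a1 (.cons a2 (.cons a3 (.cons a4 .nil))), ?_, rfl⟩
  have e12 : j1 - j2 ≠ 0 := sub_ne_zero.mpr h12
  have e13 : j1 ≠ j3 + (j1 - j2) := by
    intro h
    apply h23
    have : j2 = j3 := by linear_combination h
    exact this
  rw [SimpleGraph.Walk.isCycle_def]
  refine ⟨?_, by simp, ?_⟩
  · simp only [SimpleGraph.Walk.isTrail_def, SimpleGraph.Walk.edges_cons,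
      SimpleGraph.Walk.edges_nil, List.nodup_cons, List.mem_cons, List.not_mem_nil,
      List.nodup_nil, or_false, and_true, not_or]
    simp [one_def, -r_zero, Sym2.eq, Sym2.rel_iff', e12, e13, e12.symm, Ne.symm e13]
  · simp only [SimpleGraph.Walk.support_cons, SimpleGraph.Walk.support_nil, List.tail_cons]
    simp [one_def, -r_zero, e12, e13, e12.symm, Ne.symm e13]

/-- `G(p₁,p₂,p₃)` has a cycle of length 4 iff the triangle `T(p₁,p₂,p₃)` is isosceles or right. -/
theorem length_four_cycle_iff_isosceles_or_right
    (n p₁ p₂ p₃ : ℕ) (hn : 3 ≤ n)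
    (hp₁ : 0 < p₁) (hp₂ : 0 < p₂) (hp₃ : 0 < p₃)
    (hsum : n = p₁ + p₂ + p₃)
    (hgcd : Nat.gcd p₁ (Nat.gcd p₂ p₃) = 1) :
    (∃ (v : DihedralGroup n) (w : (billiardGraph n p₂ p₃).Walk v v),
        w.IsCycle ∧ w.length = 4) ↔
      ((p₁ = p₂ ∨ p₂ = p₃ ∨ p₁ = p₃) ∨ (2 * p₁ = n ∨ 2 * p₂ = n ∨ 2 * p₃ = n)) := by
  haveI : NeZero n := ⟨by omega⟩
  have hcastn : ((n : ℕ) : ZMod n) = 0 := ZMod.natCast_self n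
  have hnz : ∀ m : ℕ, 0 < m → m < n → (m : ZMod n) ≠ 0 := by
    intro m h1 h2 h
    have := Nat.le_of_dvd h1 ((ZMod.natCast_eq_zero_iff m n).mp h)
    omega
  have hneg : ((n - p₂ : ℕ) : ZMod n) = -(p₂ : ZMod n) := by
    rw [Nat.cast_sub (by omega)]
    rw [hcastn]; ring
  have np3 : (p₃ : ZMod n) ≠ 0 := hnz p₃ hp₃ (by omega)
  have np2 : -(p₂ : ZMod n) ≠ 0 := by
    simpa using hnz p₂ hp₂ (by omega)
  have np23 : (p₃ : ZMod n) ≠ -(p₂ : ZMod n) := by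
    intro h
    apply hnz (p₃ + p₂) (by omega) (by omega)
    push_cast
    rw [h]; ring
  constructor
  · rintro ⟨v, w, hcyc, hlen⟩
    cases w with
    | nil => simp at hlen
    | cons h1 w =>
    rename_i v1
    cases w with
    | nil => simp at hlen
    | cons h2 w =>
    rename_i v2
    cases w with
    | nil => simp at hlen
    | cons h3 w =>
    rename_i v3
    cases w with
    | nil => simp at hlen
    | cons h4 w =>
    cases w with
    | cons h5 w => simp [SimpleGraph.Walk.length_cons] at hlen
    | nil =>
    -- extract distinctness from the cycle
    rw [SimpleGraph.Walk.isCycle_def] at hcyc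
    obtain ⟨-, -, hnd⟩ := hcyc
    simp only [SimpleGraph.Walk.support_cons, SimpleGraph.Walk.support_nil,
      List.tail_cons, List.nodup_cons, List.mem_cons, List.not_mem_nil, or_false,
      List.nodup_nil, and_true, not_or] at hnd
    obtain ⟨⟨h12', h13', -⟩, ⟨h23', hv2v⟩, hv3v⟩ := hnd
    -- extract generators
    have memS : ∀ g : DihedralGroup n,
        g ∈ ({sr 0, sr (p₃ : ZMod n), sr (-(p₂ : ZMod n))} : Set (DihedralGroup n)) →
        ∃ m : ℕ, (m = 0 ∨ m = p₃ ∨ m = n - p₂) ∧ m < n ∧ g = sr (m : ZMod n) := by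
      rintro g (rfl | rfl | rfl)
      · exact ⟨0, by tauto, by omega, by simp⟩
      · exact ⟨p₃, by tauto, by omega, rfl⟩
      · exact ⟨n - p₂, by tauto, by omega, by rw [hneg]⟩
    obtain ⟨-, g1, hg1, hv1⟩ := h1
    obtain ⟨-, g2, hg2, hv2⟩ := h2
    obtain ⟨-, g3, hg3, hv3⟩ := h3
    obtain ⟨-, g4, hg4, hv4⟩ := h4
    obtain ⟨m1, hm1, hm1n, rfl⟩ := memS g1 hg1
    obtain ⟨m2, hm2, hm2n, rfl⟩ := memS g2 hg2
    obtain ⟨m3, hm3, hm3n, rfl⟩ := memS g3 hg3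
    obtain ⟨m4, hm4, hm4n, rfl⟩ := memS g4 hg4
    -- m1 ≠ m2 and m2 ≠ m3
    have hne12 : m1 ≠ m2 := by
      rintro rfl
      apply hv2v
      rw [hv2, hv1, ← mul_assoc, sr_mul_sr, sub_self, ← one_def, one_mul]
    have hne23 : m2 ≠ m3 := by
      rintro rfl
      apply h13'
      rw [hv3, hv2, ← mul_assoc, sr_mul_sr, sub_self, ← one_def, one_mul]
    -- the closure equation
    have hstep : (sr ((m4 : ℕ) : ZMod n) * (sr ((m3 : ℕ) : ZMod n) *
        (sr ((m2 : ℕ) : ZMod n) * sr ((m1 : ℕ) : ZMod n)))) * v = 1 * v := by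
      rw [one_mul]
      simp only [mul_assoc]
      rw [← hv1, ← hv2, ← hv3]
      exact hv4.symm
    have hkey := mul_right_cancel hstep
    simp only [sr_mul_sr, sr_mul_r, one_def, r.injEq] at hkey
    -- pass to natural numbers
    have hS0 : ((m1 + m3 + 2*n - (m2 + m4) : ℕ) : ZMod n) = 0 := by
      rw [Nat.cast_sub (by omega)]
      push_cast
      linear_combination hkey + 2 * hcastn
    obtain ⟨c, hc⟩ := (ZMod.natCast_eq_zero_iff _ _).mp hS0
    have hc4 : c < 4 := by
      by_contra h
      push_neg at h
      have : n * 4 ≤ n * c := Nat.mul_le_mul_left n h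
      omega
    interval_cases c <;> omega
  · have mem0 : (0 : ZMod n) ∈ ({0, (p₃:ZMod n), -(p₂:ZMod n)} : Set (ZMod n)) := by simp
    have mem3 : ((p₃:ZMod n)) ∈ ({0, (p₃:ZMod n), -(p₂:ZMod n)} : Set (ZMod n)) := by simp
    have mem2 : (-(p₂:ZMod n)) ∈ ({0, (p₃:ZMod n), -(p₂:ZMod n)} : Set (ZMod n)) := by simp
    have key : ∀ m : ℕ, m = n → ((m : ℕ) : ZMod n) = 0 := by
      rintro m rfl; exact hcastn
    rintro ((h | h | h) | (h | h | h))
    · -- p₁ = p₂ : (p₃, -p₂, 0, -p₂)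
      refine billiard_cycle_aux n p₂ p₃ _ _ _ _ mem3 mem2 mem0 mem2 ?_ np23 np2
      have := key (p₃ + p₂ + p₂) (by omega)
      push_cast at this
      linear_combination this
    · -- p₂ = p₃ : (p₃, 0, -p₂, 0)
      refine billiard_cycle_aux n p₂ p₃ _ _ _ _ mem3 mem0 mem2 mem0 ?_ np3 np2.symm
      have : ((p₂ : ℕ) : ZMod n) = ((p₃ : ℕ) : ZMod n) := by rw [h]
      push_cast at this
      linear_combination -this
    · -- p₁ = p₃ : (0, p₃, -p₂, p₃)
      refine billiard_cycle_aux n p₂ p₃ _ _ _ _ mem0 mem3 mem2 mem3 ?_ (Ne.symm np3) np23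
      have := key (p₃ + p₂ + p₃) (by omega)
      push_cast at this
      linear_combination -this
    · -- 2p₁ = n : (p₃, -p₂, p₃, -p₂)
      refine billiard_cycle_aux n p₂ p₃ _ _ _ _ mem3 mem2 mem3 mem2 ?_ np23 (Ne.symm np23)
      have := key (p₃ + p₂ + p₃ + p₂) (by omega)
      push_cast at this
      linear_combination this
    · -- 2p₂ = n : (-p₂, 0, -p₂, 0)
      refine billiard_cycle_aux n p₂ p₃ _ _ _ _ mem2 mem0 mem2 mem0 ?_ np2 np2.symm
      have := key (p₂ + p₂) (by omega)
      push_cast at this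
      linear_combination -this
    · -- 2p₃ = n : (p₃, 0, p₃, 0)
      refine billiard_cycle_aux n p₂ p₃ _ _ _ _ mem3 mem0 mem3 mem0 ?_ np3 np3.symm
      have := key (p₃ + p₃) (by omega)
      push_cast at this
      linear_combination this
end

section
/- Let p₁, p₂, p₃ be positive integers with n = p₁+p₂+p₃ ≥ 1 and gcd(p₁,p₂,p₃) = 1, and suppose the triangle T(p₁,p₂,p₃) is isosceles or right (i.e., p₁ = p₂ or p₂ = p₃ or p₁ = p₃, or 2p₁ = n or 2p₂ = n or 2p₃ = n). Then two of the three reflections suffice to generate the dihedral group: there exist two distinct elements x, y amongst a = sr 0, b = sr p₃, c = sr (-p₂) in DihedralGroup n such that the subgroup closure of {x, y} is the whole group. -/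
open DihedralGroup

lemma aux_gen (n : ℕ) (hn : 1 < n) (a k : ZMod n) (hk : IsUnit k) :
    Subgroup.closure ({sr a, sr (a + k)} : Set (DihedralGroup n)) = ⊤ := by
  haveI : NeZero n := ⟨by omega⟩
  set H := Subgroup.closure ({sr a, sr (a + k)} : Set (DihedralGroup n)) with hH
  have h1 : sr a ∈ H := Subgroup.subset_closure (by simp)
  have h2 : sr (a + k) ∈ H := Subgroup.subset_closure (by simp)
  have hrk : (r k : DihedralGroup n) ∈ H := by
    have := H.mul_mem h1 h2
    simpa [sr_mul_sr] using this
  have hrpow : ∀ m : ℕ, (r k : DihedralGroup n) ^ m = r ((m : ZMod n) * k) := by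
    intro m
    induction m with
    | zero => simp [DihedralGroup.one_def, -r_zero]
    | succ m ih => rw [pow_succ, ih, r_mul_r]; push_cast; ring_nf
  have hrall : ∀ j : ZMod n, (r j : DihedralGroup n) ∈ H := by
    intro j
    obtain ⟨u, hu⟩ := hk
    have heq : (r k : DihedralGroup n) ^ ((j * (↑u⁻¹ : ZMod n)).val) = r j := by
      rw [hrpow]
      congr 1
      rw [ZMod.natCast_val, ZMod.cast_id, mul_assoc, ← hu]
      have : (↑u⁻¹ : ZMod n) * ↑u = 1 := by
        rw [← Units.val_mul, inv_mul_cancel, Units.val_one]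
      rw [this, mul_one]
    exact heq ▸ H.pow_mem hrk _
  rw [eq_top_iff]
  intro g _
  match g with
  | DihedralGroup.r j => exact hrall j
  | DihedralGroup.sr j =>
    have := H.mul_mem h1 (hrall (-a + j))
    simpa [sr_mul_r] using this

/-- For an isosceles or right rational triangle `T(p₁,p₂,p₃)`, two of the three reflections
`a = sr 0`, `b = sr p₃`, `c = sr (-p₂)` suffice to generate `DihedralGroup n`. -/
theorem two_reflections_generate_of_isosceles_or_right
    (n p₁ p₂ p₃ : ℕ) (hn : 1 ≤ n)
    (hp₁ : 0 < p₁) (hp₂ : 0 < p₂) (hp₃ : 0 < p₃)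
    (hsum : n = p₁ + p₂ + p₃)
    (hgcd : Nat.gcd p₁ (Nat.gcd p₂ p₃) = 1)
    (htri : (p₁ = p₂ ∨ p₂ = p₃ ∨ p₁ = p₃) ∨ (2 * p₁ = n ∨ 2 * p₂ = n ∨ 2 * p₃ = n)) :
    ∃ x y : DihedralGroup n, x ≠ y ∧
      x ∈ ({sr 0, sr (p₃ : ZMod n), sr (-(p₂ : ZMod n))} : Set (DihedralGroup n)) ∧
      y ∈ ({sr 0, sr (p₃ : ZMod n), sr (-(p₂ : ZMod n))} : Set (DihedralGroup n)) ∧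
      Subgroup.closure ({x, y} : Set (DihedralGroup n)) = ⊤ := by
  have hn3 : 1 < n := by omega
  haveI : NeZero n := ⟨by omega⟩
  -- someone is coprime to n
  have key : Nat.Coprime p₁ n ∨ Nat.Coprime p₂ n ∨ Nat.Coprime p₃ n := by
    rcases htri with (h | h | h) | (h | h | h)
    · -- p₁ = p₂
      left
      have h13 : Nat.Coprime p₁ p₃ := by
        have : Nat.gcd p₁ (Nat.gcd p₁ p₃) = Nat.gcd p₁ p₃ :=
          Nat.gcd_eq_right (Nat.gcd_dvd_left _ _)
        rw [← h] at hgcd; rw [this] at hgcd; exact hgcd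
      have : n = p₃ + p₁ * 2 := by omega
      rw [this]
      exact (Nat.coprime_add_mul_left_right _ _ 2).mpr h13
    · -- p₂ = p₃
      right; left
      have h21 : Nat.Coprime p₂ p₁ := by
        rw [← h, Nat.gcd_self] at hgcd
        exact (Nat.coprime_comm.mp hgcd)
      have : n = p₁ + p₂ * 2 := by omega
      rw [this]
      exact (Nat.coprime_add_mul_left_right _ _ 2).mpr h21
    · -- p₁ = p₃
      left
      have h12 : Nat.Coprime p₁ p₂ := by
        have : Nat.gcd p₁ (Nat.gcd p₂ p₁) = Nat.gcd p₁ p₂ := by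
          rw [Nat.gcd_comm p₂ p₁]
          exact Nat.gcd_eq_right (Nat.gcd_dvd_left _ _)
        rw [← h] at hgcd; rw [this] at hgcd; exact hgcd
      have : n = p₂ + p₁ * 2 := by omega
      rw [this]
      exact (Nat.coprime_add_mul_left_right _ _ 2).mpr h12
    · -- 2 p₁ = n, so p₁ = p₂ + p₃
      have hp : p₁ = p₂ + p₃ := by omega
      have h23 : Nat.Coprime p₂ p₃ := by
        have hd : Nat.gcd p₂ p₃ ∣ Nat.gcd p₁ (Nat.gcd p₂ p₃) :=
          Nat.dvd_gcd (hp ▸ Nat.dvd_add (Nat.gcd_dvd_left _ _) (Nat.gcd_dvd_right _ _))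
            dvd_rfl
        rw [hgcd] at hd
        exact Nat.eq_one_of_dvd_one hd
      have hne : n = 2 * p₃ + p₂ * 2 := by omega
      rcases Nat.even_or_odd p₂ with he | ho
      · -- p₃ odd
        right; right
        have ho3 : Nat.Coprime p₃ 2 := by
          rcases Nat.even_or_odd p₃ with he3 | ho3
          · exfalso
            have : 2 ∣ Nat.gcd p₂ p₃ := Nat.dvd_gcd he.two_dvd he3.two_dvd
            rw [h23] at this; omega
          · simpa [Nat.coprime_two_right] using ho3
        have : n = 2 * p₂ + p₃ * 2 := by omega
        rw [this]
        exact (Nat.coprime_add_mul_left_right _ _ 2).mpr (ho3.mul_right (Nat.coprime_comm.mp h23))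
      · right; left
        have ho2 : Nat.Coprime p₂ 2 := by
          simpa [Nat.coprime_two_right] using ho
        rw [hne]
        exact (Nat.coprime_add_mul_left_right _ _ 2).mpr (ho2.mul_right h23)
    · -- 2 p₂ = n, p₂ = p₁ + p₃
      have hp : p₂ = p₁ + p₃ := by omega
      have h13 : Nat.Coprime p₁ p₃ := by
        have hd : Nat.gcd p₁ p₃ ∣ Nat.gcd p₁ (Nat.gcd p₂ p₃) :=
          Nat.dvd_gcd (Nat.gcd_dvd_left _ _)
            (Nat.dvd_gcd (hp ▸ Nat.dvd_add (Nat.gcd_dvd_left _ _) (Nat.gcd_dvd_right _ _))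
              (Nat.gcd_dvd_right _ _))
        rw [hgcd] at hd
        exact Nat.eq_one_of_dvd_one hd
      rcases Nat.even_or_odd p₁ with he | ho
      · right; right
        have ho3 : Nat.Coprime p₃ 2 := by
          rcases Nat.even_or_odd p₃ with he3 | ho3
          · exfalso
            have : 2 ∣ Nat.gcd p₁ p₃ := Nat.dvd_gcd he.two_dvd he3.two_dvd
            rw [h13] at this; omega
          · simpa [Nat.coprime_two_right] using ho3
        have : n = 2 * p₁ + p₃ * 2 := by omega
        rw [this]
        exact (Nat.coprime_add_mul_left_right _ _ 2).mpr (ho3.mul_right (Nat.coprime_comm.mp h13))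
      · left
        have ho1 : Nat.Coprime p₁ 2 := by
          simpa [Nat.coprime_two_right] using ho
        have : n = 2 * p₃ + p₁ * 2 := by omega
        rw [this]
        exact (Nat.coprime_add_mul_left_right _ _ 2).mpr (ho1.mul_right h13)
    · -- 2 p₃ = n, p₃ = p₁ + p₂
      have hp : p₃ = p₁ + p₂ := by omega
      have h12 : Nat.Coprime p₁ p₂ := by
        have hd : Nat.gcd p₁ p₂ ∣ Nat.gcd p₁ (Nat.gcd p₂ p₃) :=
          Nat.dvd_gcd (Nat.gcd_dvd_left _ _)
            (Nat.dvd_gcd (Nat.gcd_dvd_right _ _)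
              (hp ▸ Nat.dvd_add (Nat.gcd_dvd_left _ _) (Nat.gcd_dvd_right _ _)))
        rw [hgcd] at hd
        exact Nat.eq_one_of_dvd_one hd
      rcases Nat.even_or_odd p₁ with he | ho
      · right; left
        have ho2 : Nat.Coprime p₂ 2 := by
          rcases Nat.even_or_odd p₂ with he2 | ho2
          · exfalso
            have : 2 ∣ Nat.gcd p₁ p₂ := Nat.dvd_gcd he.two_dvd he2.two_dvd
            rw [h12] at this; omega
          · simpa [Nat.coprime_two_right] using ho2
        have : n = 2 * p₁ + p₂ * 2 := by omega
        rw [this]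
        exact (Nat.coprime_add_mul_left_right _ _ 2).mpr (ho2.mul_right (Nat.coprime_comm.mp h12))
      · left
        have ho1 : Nat.Coprime p₁ 2 := by
          simpa [Nat.coprime_two_right] using ho
        have : n = 2 * p₂ + p₁ * 2 := by omega
        rw [this]
        exact (Nat.coprime_add_mul_left_right _ _ 2).mpr (ho1.mul_right h12)
  haveI : Fact (1 < n) := ⟨hn3⟩
  rcases key with hc | hc | hc
  · -- use x = sr p₃, y = sr (-p₂) = sr (p₃ + p₁)
    have hu : IsUnit ((p₁ : ZMod n)) := (ZMod.isUnit_iff_coprime p₁ n).mpr hc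
    have hrel : -(p₂ : ZMod n) = (p₃ : ZMod n) + (p₁ : ZMod n) := by
      have : ((p₁ + p₂ + p₃ : ℕ) : ZMod n) = 0 := by
        rw [← hsum, ZMod.natCast_self]
      push_cast at this
      linear_combination -this
    refine ⟨sr (p₃ : ZMod n), sr (-(p₂ : ZMod n)), ?_, by simp, by simp, ?_⟩
    · simp only [ne_eq, DihedralGroup.sr.injEq, hrel]
      intro h
      exact hu.ne_zero (by linear_combination -h)
    · rw [hrel]
      exact aux_gen n hn3 _ _ hu
  · -- use x = sr (-p₂), y = sr 0 = sr (-p₂ + p₂)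
    have hu : IsUnit ((p₂ : ZMod n)) := (ZMod.isUnit_iff_coprime p₂ n).mpr hc
    refine ⟨sr (-(p₂ : ZMod n)), sr 0, ?_, by simp, by simp, ?_⟩
    · simp only [ne_eq, DihedralGroup.sr.injEq]
      intro h
      exact hu.ne_zero (by linear_combination -h)
    · have : (0 : ZMod n) = -(p₂ : ZMod n) + (p₂ : ZMod n) := by ring
      rw [this]
      exact aux_gen n hn3 _ _ hu
  · -- use x = sr 0, y = sr p₃
    have hu : IsUnit ((p₃ : ZMod n)) := (ZMod.isUnit_iff_coprime p₃ n).mpr hc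
    refine ⟨sr 0, sr (p₃ : ZMod n), ?_, by simp, by simp, ?_⟩
    · simp only [ne_eq, DihedralGroup.sr.injEq]
      intro h
      exact hu.ne_zero h.symm
    · have : (p₃ : ZMod n) = 0 + (p₃ : ZMod n) := by ring
      rw [this]
      exact aux_gen n hn3 _ _ hu
end

section
/- Let p₁, p₂, p₃ be positive integers with n = p₁+p₂+p₃ ≥ 1 and gcd(p₁,p₂,p₃) = 1. Then the three reflections a = sr 0, b = sr p₃, c = sr (-p₂) generate DihedralGroup n: the subgroup closure of {a, b, c} is the whole group (of order 2n). -/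
open DihedralGroup

lemma r_pow_aux {n : ℕ} (i : ZMod n) (k : ℕ) :
    (r i : DihedralGroup n) ^ k = r (i * (k : ZMod n)) := by
  induction k with
  | zero => simp [one_def, -r_zero]
  | succ k IH =>
      rw [pow_succ, IH, r_mul_r]
      congr 1
      push_cast
      ring

lemma r_zpow_aux {n : ℕ} (i : ZMod n) (z : ℤ) :
    (r i : DihedralGroup n) ^ z = r (i * ((z : ℤ) : ZMod n)) := by
  cases z with
  | ofNat k =>
      rw [Int.ofNat_eq_coe, zpow_natCast, r_pow_aux]
      congr 1
      push_cast
      ring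
  | negSucc k =>
      rw [zpow_negSucc, r_pow_aux]
      rw [eq_comm, eq_inv_iff_mul_eq_one, r_mul_r, one_def]
      congr 1
      push_cast [Int.negSucc_eq]
      ring

/-- The three reflections `a = sr 0`, `b = sr p₃`, `c = sr (-p₂)` coming from the sides of the
rational triangle `T(p₁,p₂,p₃)` generate `DihedralGroup n`, where `n = p₁ + p₂ + p₃`. -/
theorem three_reflections_generate (n p₁ p₂ p₃ : ℕ) (hn : 1 ≤ n)
    (hp₁ : 0 < p₁) (hp₂ : 0 < p₂) (hp₃ : 0 < p₃)
    (hsum : n = p₁ + p₂ + p₃)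
    (hgcd : Nat.gcd p₁ (Nat.gcd p₂ p₃) = 1) :
    Subgroup.closure ({sr 0, sr (p₃ : ZMod n), sr (-(p₂ : ZMod n))} :
      Set (DihedralGroup n)) = ⊤ := by
  haveI : NeZero n := ⟨by omega⟩
  set H := Subgroup.closure ({sr 0, sr (p₃ : ZMod n), sr (-(p₂ : ZMod n))} :
      Set (DihedralGroup n)) with hH
  have ha : (sr 0 : DihedralGroup n) ∈ H := Subgroup.subset_closure (by simp)
  have hb : (sr (p₃ : ZMod n) : DihedralGroup n) ∈ H := Subgroup.subset_closure (by simp)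
  have hc : (sr (-(p₂ : ZMod n)) : DihedralGroup n) ∈ H := Subgroup.subset_closure (by simp)
  have h3 : (r (p₃ : ZMod n) : DihedralGroup n) ∈ H := by
    have := H.mul_mem ha hb
    rwa [sr_mul_sr, sub_zero] at this
  have h2 : (r (p₂ : ZMod n) : DihedralGroup n) ∈ H := by
    have := H.mul_mem hc ha
    rwa [sr_mul_sr, sub_neg_eq_add, zero_add] at this
  -- d = gcd p₂ p₃ is coprime to n
  set d := Nat.gcd p₂ p₃ with hd
  have hdn : Nat.Coprime d n := by
    have h1 : Nat.Coprime d p₁ := (Nat.coprime_comm.mp hgcd)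
    obtain ⟨m, hm⟩ : d ∣ p₂ + p₃ :=
      Dvd.dvd.add (Nat.gcd_dvd_left _ _) (Nat.gcd_dvd_right _ _)
    have : n = p₁ + d * m := by omega
    rw [this]
    exact (Nat.coprime_add_mul_left_right d p₁ m).mpr h1
  have hrd : (r (d : ZMod n) : DihedralGroup n) ∈ H := by
    have hbez : (d : ℤ) = p₂ * Nat.gcdA p₂ p₃ + p₃ * Nat.gcdB p₂ p₃ := Nat.gcd_eq_gcd_ab p₂ p₃
    have := H.mul_mem (H.zpow_mem h2 (Nat.gcdA p₂ p₃)) (H.zpow_mem h3 (Nat.gcdB p₂ p₃))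
    rw [r_zpow_aux, r_zpow_aux, r_mul_r] at this
    have heq : ((p₂ : ZMod n) * (Nat.gcdA p₂ p₃ : ZMod n) + (p₃ : ZMod n) * (Nat.gcdB p₂ p₃ : ZMod n))
        = (d : ZMod n) := by
      have := congrArg (fun z : ℤ => (z : ZMod n)) hbez
      push_cast at this ⊢
      rw [this]
    rwa [heq] at this
  -- all rotations are in H
  have hr : ∀ k : ZMod n, (r k : DihedralGroup n) ∈ H := by
    intro k
    have hu : IsUnit (d : ZMod n) := (ZMod.isUnit_iff_coprime d n).mpr hdn
    obtain ⟨u, hu⟩ := hu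
    set x : ZMod n := (u⁻¹ : (ZMod n)ˣ) * k with hx
    have hk : (d : ZMod n) * x = k := by
      rw [hx, ← hu, ← mul_assoc, ← Units.val_mul, mul_inv_cancel]
      simp
    have := H.pow_mem hrd x.val
    rw [r_pow_aux, ZMod.natCast_val, ZMod.cast_id, hk] at this
    exact this
  rw [eq_top_iff]
  intro g _
  match g with
  | DihedralGroup.r i => exact hr i
  | DihedralGroup.sr i =>
      have := H.mul_mem ha (hr i)
      rwa [sr_mul_r, zero_add] at this
end
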